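/- Let (A, {·,·}) be a Poisson superalgebra and let [·,·] be its associated bracket on Ω(A), i.e. the Gerstenhaber superalgebra bracket determined by [f, g] = 0, [f, d g] = [d f, g] = {f, g}, [d f, d g] = d{f, g} for f, g ∈ A, extended by [α, β∧γ] = [α,β]∧γ + (−1)^(p(α)p(β)) β∧[α,γ]. Then [·,·] is differential: d[α, β] = [dα, β] + (−1)^(|α|−1) [α, dβ] for all bihomogeneous α, β ∈ Ω(A). -/
import Mathlib

set_option maxHeartbeats 1000000
set_option synthInstance.maxHeartbeats 400000


open TensorProduct

namespace SuperPoisson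

variable (A : Type) [Ring A] [Algebra ℝ A]

/-- The sign `(−1)^(i·k)` attached to a pair of parities `i, k ∈ ℤ/2`. -/
def sgn (i k : ZMod 2) : ℝ := (-1 : ℝ) ^ (i.val * k.val)

lemma mul'_smul_left (a : A) (ω : A ⊗[ℝ] A) :
    LinearMap.mul' ℝ A (a • ω) = a * LinearMap.mul' ℝ A ω := by
  induction ω using TensorProduct.induction_on with
  | zero => simp
  | tmul x y =>
      rw [TensorProduct.smul_tmul']
      simp [LinearMap.mul'_apply, smul_eq_mul, mul_assoc]
  | add x y hx hy => rw [smul_add, map_add, map_add, hx, hy, mul_add]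

/-- `Ω¹(A)`: the kernel of the multiplication map `m : A ⊗_ℝ A → A`,
as an `A`-submodule of `A ⊗_ℝ A` (with `A` acting on the left tensor factor). -/
def Omega1 : Submodule A (A ⊗[ℝ] A) where
  carrier := {ω | LinearMap.mul' ℝ A ω = 0}
  add_mem' := by
    intro x y hx hy
    simp only [Set.mem_setOf_eq, map_add] at *
    rw [hx, hy, add_zero]
  zero_mem' := by simp
  smul_mem' := by
    intro a ω h
    simp only [Set.mem_setOf_eq] at *
    rw [mul'_smul_left, h, mul_zero]

/-- The derivation `d a = a ⊗ 1 − 1 ⊗ a`. -/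
noncomputable def dO (a : A) : A ⊗[ℝ] A := a ⊗ₜ[ℝ] 1 - 1 ⊗ₜ[ℝ] a

lemma dO_mem (a : A) : dO A a ∈ Omega1 A := by
  show LinearMap.mul' ℝ A (dO A a) = 0
  simp [dO, map_sub]

variable (𝒜 : ZMod 2 → Submodule ℝ A)

/-- The parity-`q` component of `A ⊗ A` (parity inherited from `A`):
the span of tensors `x ⊗ y` with `x, y` homogeneous and `p(x) + p(y) = q`. -/
def tdeg (q : ZMod 2) : Submodule ℝ (A ⊗[ℝ] A) :=
  Submodule.span ℝ
    {ω | ∃ i k : ZMod 2, ∃ x ∈ 𝒜 i, ∃ y ∈ 𝒜 k, i + k = q ∧ ω = x ⊗ₜ[ℝ] y}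

/-- `A` is graded-commutative (supercommutative). -/
def SuperComm : Prop :=
  ∀ i k : ZMod 2, ∀ a ∈ 𝒜 i, ∀ b ∈ 𝒜 k, a * b = sgn i k • (b * a)

/-- `D` is a superderivation of `A` of parity `q`. -/
def IsSuperDer (q : ZMod 2) (D : A →ₗ[ℝ] A) : Prop :=
  ∀ i : ZMod 2, ∀ f ∈ 𝒜 i, ∀ g : A, D (f * g) = D f * g + sgn q i • (f * D g)

/-- The pairing of a (super)derivation `D` with `1`-forms, determined by
`⟨D, d f⟩ = D f` and `A`-linearity in the form: on a tensor `a ⊗ b ∈ Ω¹(A)`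
it is given by `−a·D(b)`. -/
noncomputable def pairD (D : A →ₗ[ℝ] A) : A ⊗[ℝ] A →ₗ[ℝ] A :=
  - (LinearMap.mul' ℝ A ∘ₗ TensorProduct.map LinearMap.id D)

/-- A Lie superalgebroid structure on `Ω¹(A)`: an even `A`-linear anchor
`ρ : Ω¹(A) → Der(A)` and an ℝ-bilinear bracket `⟦·,·⟧` on `Ω¹(A)` which is a Lie
superbracket satisfying the graded Leibniz rule (both `ρ` and the bracket are
recorded as ℝ-(bi)linear maps on the ambient space `A ⊗ A`; all axioms are
imposed on `Ω¹(A)`). -/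
structure LieSuperalgebroid : Type where
  rho : A ⊗[ℝ] A →ₗ[ℝ] A →ₗ[ℝ] A
  br : A ⊗[ℝ] A →ₗ[ℝ] A ⊗[ℝ] A →ₗ[ℝ] A ⊗[ℝ] A
  br_mem : ∀ α ∈ Omega1 A, ∀ β ∈ Omega1 A, br α β ∈ Omega1 A
  rho_Alin : ∀ (a : A), ∀ α ∈ Omega1 A, rho (a • α) = a • rho α
  rho_der : ∀ q : ZMod 2, ∀ α ∈ Omega1 A, α ∈ tdeg A 𝒜 q → IsSuperDer A 𝒜 q (rho α)
  skew : ∀ i k : ZMod 2, ∀ α ∈ Omega1 A, ∀ β ∈ Omega1 A,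
    α ∈ tdeg A 𝒜 i → β ∈ tdeg A 𝒜 k → br α β = -(sgn i k • br β α)
  jacobi : ∀ i k m : ZMod 2, ∀ α ∈ Omega1 A, ∀ β ∈ Omega1 A, ∀ γ ∈ Omega1 A,
    α ∈ tdeg A 𝒜 i → β ∈ tdeg A 𝒜 k → γ ∈ tdeg A 𝒜 m →
    br α (br β γ) = br (br α β) γ + sgn i k • br β (br α γ)
  leibniz : ∀ i k m : ZMod 2, ∀ α ∈ Omega1 A, α ∈ tdeg A 𝒜 i → ∀ f ∈ 𝒜 k,
    ∀ β ∈ Omega1 A, β ∈ tdeg A 𝒜 m →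
    br α (f • β) = (rho α f) • β + sgn i k • (f • br α β)

/-- The anchor of a Lie superalgebroid is skew-supersymmetric:
`α(ρ(β)) = −(−1)^(p(α)p(β)) β(ρ(α))`. -/
def SkewAnchor (L : LieSuperalgebroid A 𝒜) : Prop :=
  ∀ i k : ZMod 2, ∀ α ∈ Omega1 A, ∀ β ∈ Omega1 A,
    α ∈ tdeg A 𝒜 i → β ∈ tdeg A 𝒜 k →
    pairD A (L.rho β) α = -(sgn i k • pairD A (L.rho α) β)

end SuperPoisson


namespace SuperPoisson

lemma neg_one_zpow_eq (a b k : ℤ) (h : a = b + 2 * k) : (-1 : ℝ) ^ a = (-1 : ℝ) ^ b := by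
  subst h
  rw [zpow_add₀ (by norm_num : (-1:ℝ) ≠ 0), zpow_mul]
  norm_num

lemma neg_one_zpow_parity (a b : ℤ) (h : (a - b) % 2 = 0) : (-1 : ℝ) ^ a = (-1 : ℝ) ^ b :=
  neg_one_zpow_eq a b ((a - b) / 2) (by omega)

/-- The Leibniz-compatibility step: if the differential property holds for
`(x, y₁)` and `(x, y₂)` then it holds for `(x, y₁ * y₂)`. -/
lemma prod_step {Ω : Type} [Ring Ω] [Algebra ℝ Ω]
    (grade : ℕ → ZMod 2 → Submodule ℝ Ω)
    (dΩ : Ω →ₗ[ℝ] Ω)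
    (hd_grade : ∀ (r : ℕ) (q : ZMod 2), ∀ x ∈ grade r q, dΩ x ∈ grade (r + 1) q)
    (hd_leib : ∀ (r : ℕ) (q : ZMod 2), ∀ x ∈ grade r q, ∀ y : Ω,
      dΩ (x * y) = dΩ x * y + ((-1 : ℝ) ^ r) • (x * dΩ y))
    (gb : Ω →ₗ[ℝ] Ω →ₗ[ℝ] Ω)
    (hgb_deg : ∀ (r s : ℕ) (q t : ZMod 2), ∀ x ∈ grade r q, ∀ y ∈ grade s t,
      (∀ u : ℕ, (u : ℤ) = (r : ℤ) + (s : ℤ) - 1 → gb x y ∈ grade u (q + t)) ∧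
      ((r : ℤ) + (s : ℤ) - 1 < 0 → gb x y = 0))
    (hgb_leib : ∀ (r s u : ℕ) (q t v : ZMod 2),
      ∀ x ∈ grade r q, ∀ y ∈ grade s t, ∀ z ∈ grade u v,
      gb x (y * z) = (gb x y) * z +
        ((((-1 : ℝ) ^ (((r : ℤ) - 1) * (s : ℤ))) *
          ((-1 : ℝ) ^ (q.val * t.val))) • (y * gb x z)))
    (r s₁ s₂ : ℕ) (q t₁ t₂ : ZMod 2)
    (x : Ω) (hx : x ∈ grade r q) (y₁ : Ω) (hy₁ : y₁ ∈ grade s₁ t₁)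
    (y₂ : Ω) (hy₂ : y₂ ∈ grade s₂ t₂)
    (IH1 : dΩ (gb x y₁) = gb (dΩ x) y₁ + ((-1:ℝ)^((r:ℤ)-1)) • gb x (dΩ y₁))
    (IH2 : dΩ (gb x y₂) = gb (dΩ x) y₂ + ((-1:ℝ)^((r:ℤ)-1)) • gb x (dΩ y₂)) :
    dΩ (gb x (y₁ * y₂)) = gb (dΩ x) (y₁ * y₂) +
      ((-1:ℝ)^((r:ℤ)-1)) • gb x (dΩ (y₁ * y₂)) := by
  have hX := hd_grade r q x hx
  have hY₁ := hd_grade s₁ t₁ y₁ hy₁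
  have hY₂ := hd_grade s₂ t₂ y₂ hy₂
  have hkey : dΩ (gb x y₁ * y₂) = dΩ (gb x y₁) * y₂ +
      ((-1:ℝ)^((r:ℤ)+(s₁:ℤ)-1)) • (gb x y₁ * dΩ y₂) := by
    rcases Nat.eq_zero_or_pos (r + s₁) with h0 | hpos
    · have hz : gb x y₁ = 0 := (hgb_deg r s₁ q t₁ x hx y₁ hy₁).2 (by omega)
      rw [hz]; simp
    · obtain ⟨u, hu⟩ : ∃ u : ℕ, (u : ℤ) = (r:ℤ) + (s₁:ℤ) - 1 := ⟨r + s₁ - 1, by omega⟩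
      have hmem : gb x y₁ ∈ grade u (q + t₁) := (hgb_deg r s₁ q t₁ x hx y₁ hy₁).1 u hu
      rw [hd_leib u (q + t₁) _ hmem y₂]
      rw [show ((-1:ℝ) ^ u) = (-1:ℝ)^((r:ℤ)+(s₁:ℤ)-1) by rw [← zpow_natCast, hu]]
  rw [hgb_leib r s₁ s₂ q t₁ t₂ x hx y₁ hy₁ y₂ hy₂]
  rw [map_add, map_smul, hkey, hd_leib s₁ t₁ y₁ hy₁ (gb x y₂), IH1, IH2]
  rw [hd_leib s₁ t₁ y₁ hy₁ y₂]
  rw [map_add, map_smul]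
  rw [hgb_leib (r+1) s₁ s₂ q t₁ t₂ (dΩ x) hX y₁ hy₁ y₂ hy₂]
  rw [hgb_leib r (s₁+1) s₂ q t₁ t₂ x hx (dΩ y₁) hY₁ y₂ hy₂]
  rw [hgb_leib r s₁ (s₂+1) q t₁ t₂ x hx y₁ hy₁ (dΩ y₂) hY₂]
  simp only [add_mul, smul_mul_assoc, mul_add, mul_smul_comm, smul_add, smul_smul, map_add,
    map_smul]
  match_scalars
  all_goals try ring
  all_goals simp only [← zpow_natCast (-1 : ℝ), ← zpow_add₀ (by norm_num : (-1:ℝ) ≠ 0)]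
  all_goals try (apply neg_one_zpow_parity; ring_nf; try omega)

/-- The differential property is symmetric in its two arguments. -/
lemma symm_step {Ω : Type} [Ring Ω] [Algebra ℝ Ω]
    (grade : ℕ → ZMod 2 → Submodule ℝ Ω)
    (dΩ : Ω →ₗ[ℝ] Ω)
    (hd_grade : ∀ (r : ℕ) (q : ZMod 2), ∀ x ∈ grade r q, dΩ x ∈ grade (r + 1) q)
    (gb : Ω →ₗ[ℝ] Ω →ₗ[ℝ] Ω)
    (hgb_skew : ∀ (r s : ℕ) (q t : ZMod 2), ∀ x ∈ grade r q, ∀ y ∈ grade s t,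
      gb x y = -((((-1 : ℝ) ^ (((r : ℤ) - 1) * ((s : ℤ) - 1))) *
        ((-1 : ℝ) ^ (q.val * t.val))) • gb y x))
    (r s : ℕ) (q t : ZMod 2)
    (x : Ω) (hx : x ∈ grade r q) (y : Ω) (hy : y ∈ grade s t)
    (h : dΩ (gb y x) = gb (dΩ y) x + ((-1:ℝ)^((s:ℤ)-1)) • gb y (dΩ x)) :
    dΩ (gb x y) = gb (dΩ x) y + ((-1:ℝ)^((r:ℤ)-1)) • gb x (dΩ y) := by
  have hX := hd_grade r q x hx
  have hY := hd_grade s t y hy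
  rw [hgb_skew r s q t x hx y hy]
  rw [hgb_skew (r+1) s q t (dΩ x) hX y hy]
  rw [hgb_skew r (s+1) q t x hx (dΩ y) hY]
  rw [map_neg, map_smul, h]
  simp only [smul_add, smul_smul, neg_add, smul_neg, neg_neg]
  match_scalars
  all_goals try ring
  all_goals simp only [← zpow_natCast (-1 : ℝ), ← zpow_add₀ (by norm_num : (-1:ℝ) ≠ 0)]
  all_goals try rw [neg_inj]
  all_goals try (apply neg_one_zpow_parity; ring_nf; try omega)

variable (A : Type) [Ring A] [Algebra ℝ A]

/-- `dO` as an additive monoid hom. -/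
noncomputable def dOhom : A →+ A ⊗[ℝ] A where
  toFun := dO A
  map_zero' := by simp [dO]
  map_add' a b := by
    simp only [dO, TensorProduct.add_tmul, TensorProduct.tmul_add]
    abel

lemma smul_dO (a b : A) : a • dO A b = (a * b) ⊗ₜ[ℝ] 1 - a ⊗ₜ[ℝ] b := by
  simp only [dO, smul_sub, TensorProduct.smul_tmul', smul_eq_mul, mul_one]

variable (𝒜 : ZMod 2 → Submodule ℝ A) [GradedAlgebra 𝒜]

/-- Every element of `Ω¹(A)` is an `ℝ`-linear combination of elements
`a • d b` with `a`, `b` homogeneous. -/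
lemma omega1_span (α : A ⊗[ℝ] A) (hα : LinearMap.mul' ℝ A α = 0) :
    α ∈ Submodule.span ℝ
      {ω : A ⊗[ℝ] A | ∃ i k : ZMod 2, ∃ a ∈ 𝒜 i, ∃ b ∈ 𝒜 k, ω = a • dO A b} := by
  classical
  set G : Set (A ⊗[ℝ] A) :=
    {ω : A ⊗[ℝ] A | ∃ i k : ZMod 2, ∃ a ∈ 𝒜 i, ∃ b ∈ 𝒜 k, ω = a • dO A b} with hG
  have step2 : ∀ a b : A, a • dO A b ∈ Submodule.span ℝ G := by
    intro a b
    have ha := DirectSum.sum_support_decompose 𝒜 a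
    have hb := DirectSum.sum_support_decompose 𝒜 b
    have key : a • dO A b = ∑ i ∈ DFinsupp.support (DirectSum.decompose 𝒜 a),
        ∑ k ∈ DFinsupp.support (DirectSum.decompose 𝒜 b),
        ((DirectSum.decompose 𝒜 a i : A)) • dO A ((DirectSum.decompose 𝒜 b k : A)) :=
      calc a • dO A b
          = (∑ i ∈ DFinsupp.support (DirectSum.decompose 𝒜 a),
              ((DirectSum.decompose 𝒜 a i : A))) • dO A b := by rw [ha]
        _ = ∑ i ∈ DFinsupp.support (DirectSum.decompose 𝒜 a),
              ((DirectSum.decompose 𝒜 a i : A)) • dO A b := Finset.sum_smul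
        _ = ∑ i ∈ DFinsupp.support (DirectSum.decompose 𝒜 a),
              ∑ k ∈ DFinsupp.support (DirectSum.decompose 𝒜 b),
              ((DirectSum.decompose 𝒜 a i : A)) • dO A ((DirectSum.decompose 𝒜 b k : A)) := by
            refine Finset.sum_congr rfl fun i _ => ?_
            rw [show dO A b = ∑ k ∈ DFinsupp.support (DirectSum.decompose 𝒜 b),
                dO A ((DirectSum.decompose 𝒜 b k : A)) by
              conv_lhs => rw [← hb]
              exact map_sum (dOhom A) _ _]
            exact Finset.smul_sum
    rw [key]
    refine Submodule.sum_mem _ fun i _ => Submodule.sum_mem _ fun k _ => ?_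
    exact Submodule.subset_span ⟨i, k, _, (DirectSum.decompose 𝒜 a i).2, _,
      (DirectSum.decompose 𝒜 b k).2, rfl⟩
  have step1 : ∀ ω : A ⊗[ℝ] A,
      ω - (LinearMap.mul' ℝ A ω) ⊗ₜ[ℝ] 1 ∈ Submodule.span ℝ G := by
    intro ω
    induction ω using TensorProduct.induction_on with
    | zero => simp
    | tmul a b =>
        have h : a ⊗ₜ[ℝ] b - (LinearMap.mul' ℝ A (a ⊗ₜ[ℝ] b)) ⊗ₜ[ℝ] 1 = -(a • dO A b) := by
          rw [LinearMap.mul'_apply, smul_dO]; abel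
        rw [h]
        exact neg_mem (step2 a b)
    | add x y hx hy =>
        have h : x + y - (LinearMap.mul' ℝ A (x + y)) ⊗ₜ[ℝ] 1 =
            (x - (LinearMap.mul' ℝ A x) ⊗ₜ[ℝ] 1) + (y - (LinearMap.mul' ℝ A y) ⊗ₜ[ℝ] 1) := by
          rw [map_add, TensorProduct.add_tmul]; abel
        rw [h]; exact add_mem hx hy
  have h := step1 α
  rw [hα] at h
  simpa using h

end SuperPoisson

namespace SuperPoisson

/-- Let `(A, {·,·})` be a Poisson superalgebra and let `[·,·]`
be its associated Gerstenhaber superalgebra bracket on `Ω(A)`, determined by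
`[f,g] = 0`, `[f, d g] = [d f, g] = {f,g}`, `[d f, d g] = d{f,g}`. Then `[·,·]`
is differential: `d[α,β] = [dα,β] + (−1)^(|α|−1)[α,dβ]`. -/
theorem associated_bracket_is_differential
    (A : Type) [Ring A] [Algebra ℝ A] (𝒜 : ZMod 2 → Submodule ℝ A) [GradedAlgebra 𝒜]
    (hcomm : SuperComm A 𝒜)
    -- `(A, {·,·})` is a Poisson superalgebra:
    (pb : A →ₗ[ℝ] A →ₗ[ℝ] A)
    (hpar : ∀ i k : ZMod 2, ∀ f ∈ 𝒜 i, ∀ g ∈ 𝒜 k, pb f g ∈ 𝒜 (i + k))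
    (hskew : ∀ i k : ZMod 2, ∀ f ∈ 𝒜 i, ∀ g ∈ 𝒜 k, pb f g = -(sgn i k • pb g f))
    (hjac : ∀ i k m : ZMod 2, ∀ f ∈ 𝒜 i, ∀ g ∈ 𝒜 k, ∀ h ∈ 𝒜 m,
      pb f (pb g h) = pb (pb f g) h + sgn i k • pb g (pb f h))
    (hleib : ∀ i k m : ZMod 2, ∀ f ∈ 𝒜 i, ∀ g ∈ 𝒜 k, ∀ h ∈ 𝒜 m,
      pb f (g * h) = pb f g * h + sgn i k • (g * pb f h))
    -- A model `Ω` of the algebra `Ω(A) = ⊕_{r} (Ω¹(A))^r` of graded forms: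
    (Ω : Type) [Ring Ω] [Algebra ℝ Ω]
    (grade : ℕ → ZMod 2 → Submodule ℝ Ω)
    (hdecomp : DirectSum.IsInternal (fun p : ℕ × ZMod 2 => grade p.1 p.2))
    (hone : (1 : Ω) ∈ grade 0 0)
    (hmul : ∀ (r s : ℕ) (q t : ZMod 2), ∀ x ∈ grade r q, ∀ y ∈ grade s t,
      x * y ∈ grade (r + s) (q + t))
    (hscomm : ∀ (r s : ℕ) (q t : ZMod 2), ∀ x ∈ grade r q, ∀ y ∈ grade s t,
      x * y = ((-1 : ℝ) ^ (r * s + q.val * t.val)) • (y * x))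
    (ι : A →ₐ[ℝ] Ω) (hι_inj : Function.Injective ι)
    (hι_grade : ∀ q : ZMod 2, Submodule.map ι.toLinearMap (𝒜 q) = grade 0 q)
    (j : A ⊗[ℝ] A → Ω)
    (hj_add : ∀ α ∈ Omega1 A, ∀ β ∈ Omega1 A, j (α + β) = j α + j β)
    (hj_smul : ∀ (a : A), ∀ α ∈ Omega1 A, j (a • α) = ι a * j α)
    (hj_inj : ∀ α ∈ Omega1 A, ∀ β ∈ Omega1 A, j α = j β → α = β)
    (hj_grade : ∀ q : ZMod 2, ∀ α ∈ Omega1 A, α ∈ tdeg A 𝒜 q → j α ∈ grade 1 q)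
    (hj_surj : ∀ q : ZMod 2, ∀ x ∈ grade 1 q,
      ∃ α ∈ Omega1 A, α ∈ tdeg A 𝒜 q ∧ j α = x)
    (hgen : Algebra.adjoin ℝ
      (Set.range ι ∪ j '' (Omega1 A : Set (A ⊗[ℝ] A))) = ⊤)
    -- the exterior superderivative on the model `Ω`:
    (dΩ : Ω →ₗ[ℝ] Ω)
    (hd_grade : ∀ (r : ℕ) (q : ZMod 2), ∀ x ∈ grade r q, dΩ x ∈ grade (r + 1) q)
    (hd_iota : ∀ a : A, dΩ (ι a) = j (dO A a))
    (hd_leib : ∀ (r : ℕ) (q : ZMod 2), ∀ x ∈ grade r q, ∀ y : Ω,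
      dΩ (x * y) = dΩ x * y + ((-1 : ℝ) ^ r) • (x * dΩ y))
    (hd_sq : ∀ x : Ω, dΩ (dΩ x) = 0)
    -- a Gerstenhaber superalgebra bracket of ℤ-degree −1 on `Ω(A)`:
    (gb : Ω →ₗ[ℝ] Ω →ₗ[ℝ] Ω)
    (hgb_deg : ∀ (r s : ℕ) (q t : ZMod 2), ∀ x ∈ grade r q, ∀ y ∈ grade s t,
      (∀ u : ℕ, (u : ℤ) = (r : ℤ) + (s : ℤ) - 1 → gb x y ∈ grade u (q + t)) ∧
      ((r : ℤ) + (s : ℤ) - 1 < 0 → gb x y = 0))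
    (hgb_skew : ∀ (r s : ℕ) (q t : ZMod 2), ∀ x ∈ grade r q, ∀ y ∈ grade s t,
      gb x y = -((((-1 : ℝ) ^ (((r : ℤ) - 1) * ((s : ℤ) - 1))) *
        ((-1 : ℝ) ^ (q.val * t.val))) • gb y x))
    (hgb_jac : ∀ (r s u : ℕ) (q t v : ZMod 2),
      ∀ x ∈ grade r q, ∀ y ∈ grade s t, ∀ z ∈ grade u v,
      gb x (gb y z) = gb (gb x y) z +
        ((((-1 : ℝ) ^ (((r : ℤ) - 1) * ((s : ℤ) - 1))) *
          ((-1 : ℝ) ^ (q.val * t.val))) • gb y (gb x z)))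
    (hgb_leib : ∀ (r s u : ℕ) (q t v : ZMod 2),
      ∀ x ∈ grade r q, ∀ y ∈ grade s t, ∀ z ∈ grade u v,
      gb x (y * z) = (gb x y) * z +
        ((((-1 : ℝ) ^ (((r : ℤ) - 1) * (s : ℤ))) *
          ((-1 : ℝ) ^ (q.val * t.val))) • (y * gb x z)))
    -- `[·,·]` is the bracket associated to `{·,·}`:
    (h0 : ∀ f g : A, gb (ι f) (ι g) = 0)
    (h1 : ∀ f g : A, gb (ι f) (j (dO A g)) = ι (pb f g))
    (h1' : ∀ f g : A, gb (j (dO A f)) (ι g) = ι (pb f g))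
    (h2 : ∀ f g : A, gb (j (dO A f)) (j (dO A g)) = j (dO A (pb f g))) :
    -- then `[·,·]` is differential:
    ∀ (r s : ℕ) (q t : ZMod 2), ∀ x ∈ grade r q, ∀ y ∈ grade s t,
      dΩ (gb x y) = gb (dΩ x) y + ((-1 : ℝ) ^ ((r : ℤ) - 1)) • gb x (dΩ y) := by
  classical
  -- homogeneity of the letters and basic grade facts
  set L : Set Ω := {z | ∃ i : ZMod 2, ∃ a ∈ 𝒜 i, z = ι a} ∪
    {z | ∃ k : ZMod 2, ∃ b ∈ 𝒜 k, z = j (dO A b)} with hLdef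
  have hone0A : (1 : A) ∈ 𝒜 0 := SetLike.one_mem_graded 𝒜
  have hgi : ∀ (i : ZMod 2) (a : A), a ∈ 𝒜 i → (ι a : Ω) ∈ grade 0 i := by
    intro i a ha
    have h := Submodule.mem_map_of_mem (f := ι.toLinearMap) ha
    rw [hι_grade i] at h
    exact h
  have hdOtd : ∀ (k : ZMod 2) (b : A), b ∈ 𝒜 k → dO A b ∈ tdeg A 𝒜 k := by
    intro k b hb
    refine sub_mem ?_ ?_
    · exact Submodule.subset_span ⟨k, 0, b, hb, 1, hone0A, add_zero k, rfl⟩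
    · exact Submodule.subset_span ⟨0, k, 1, hone0A, b, hb, zero_add k, rfl⟩
  have hgj : ∀ (k : ZMod 2) (b : A), b ∈ 𝒜 k → (j (dO A b) : Ω) ∈ grade 1 k :=
    fun k b hb => hj_grade k (dO A b) (dO_mem A b) (hdOtd k b hb)
  have hlhom : ∀ ℓ ∈ L, ∃ p : ℕ × ZMod 2, ℓ ∈ grade p.1 p.2 := by
    rintro ℓ (⟨i, a, ha, rfl⟩ | ⟨k, b, hb, rfl⟩)
    · exact ⟨(0, i), hgi i a ha⟩
    · exact ⟨(1, k), hgj k b hb⟩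
  have hclos_hom : ∀ m ∈ Submonoid.closure L, ∃ p : ℕ × ZMod 2, m ∈ grade p.1 p.2 := by
    intro m hm
    induction hm using Submonoid.closure_induction with
    | mem z hz => exact hlhom z hz
    | one => exact ⟨(0, 0), hone⟩
    | mul a b ha hb iha ihb =>
        obtain ⟨⟨r₁, q₁⟩, h₁⟩ := iha
        obtain ⟨⟨r₂, q₂⟩, h₂⟩ := ihb
        exact ⟨(r₁ + r₂, q₁ + q₂), hmul r₁ r₂ q₁ q₂ a h₁ b h₂⟩
  -- `j 0 = 0`
  have j_zero : j (0 : A ⊗[ℝ] A) = 0 := by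
    have h := hj_add 0 (zero_mem _) 0 (zero_mem _)
    rw [add_zero] at h
    have h2 : j (0 : A ⊗[ℝ] A) + 0 = j 0 + j 0 := by rw [add_zero]; exact h
    exact (add_left_cancel h2).symm
  -- `j` of any element of `Ω¹(A)` lies in the span of the monomials in the letters
  have jmem : ∀ α, α ∈ Omega1 A →
      (j α : Ω) ∈ Submodule.span ℝ ((Submonoid.closure L : Submonoid Ω) : Set Ω) := by
    intro α hα
    have hsp := omega1_span A 𝒜 α hα
    have : α ∈ Omega1 A ∧
        (j α : Ω) ∈ Submodule.span ℝ ((Submonoid.closure L : Submonoid Ω) : Set Ω) := by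
      clear hα
      induction hsp using Submodule.span_induction with
      | mem ω hω =>
          obtain ⟨i, k, a, ha, b, hb, rfl⟩ := hω
          have hmem : a • dO A b ∈ Omega1 A := Submodule.smul_mem _ a (dO_mem A b)
          refine ⟨hmem, ?_⟩
          rw [hj_smul a (dO A b) (dO_mem A b)]
          refine Submodule.subset_span (Submonoid.mul_mem _ ?_ ?_)
          · exact Submonoid.subset_closure (Or.inl ⟨i, a, ha, rfl⟩)
          · exact Submonoid.subset_closure (Or.inr ⟨k, b, hb, rfl⟩)
      | zero => exact ⟨zero_mem _, by rw [j_zero]; exact zero_mem _⟩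
      | add u v hu hv ihu ihv =>
          exact ⟨add_mem ihu.1 ihv.1, by
            rw [hj_add u ihu.1 v ihv.1]; exact add_mem ihu.2 ihv.2⟩
      | smul c u hu ih =>
          have h1 : c • u = (algebraMap ℝ A c) • u := (algebraMap_smul A c u).symm
          have hmem : c • u ∈ Omega1 A := by
            rw [h1]; exact Submodule.smul_mem _ _ ih.1
          refine ⟨hmem, ?_⟩
          rw [h1, hj_smul _ u ih.1, AlgHom.commutes, ← Algebra.smul_def]
          exact Submodule.smul_mem _ _ ih.2
    exact this.2
  -- the span of the monomials is everything
  have hspan : ∀ z : Ω,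
      z ∈ Submodule.span ℝ ((Submonoid.closure L : Submonoid Ω) : Set Ω) := by
    have hsub : Algebra.adjoin ℝ
        (Set.range ι ∪ j '' (Omega1 A : Set (A ⊗[ℝ] A))) ≤ Algebra.adjoin ℝ L := by
      refine Algebra.adjoin_le ?_
      rintro z (⟨a, rfl⟩ | ⟨α, hα, rfl⟩)
      · have ha := DirectSum.sum_support_decompose 𝒜 a
        rw [← ha, map_sum]
        refine Subalgebra.sum_mem _ fun i _ => Algebra.subset_adjoin ?_
        exact Or.inl ⟨i, _, (DirectSum.decompose 𝒜 a i).2, rfl⟩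
      · have h := jmem α hα
        rw [← Algebra.adjoin_eq_span] at h
        exact h
    have htop : Algebra.adjoin ℝ L = ⊤ := top_unique (le_trans (le_of_eq hgen.symm) hsub)
    intro z
    have h : z ∈ Subalgebra.toSubmodule (Algebra.adjoin ℝ L) := by
      rw [htop]; exact trivial
    rwa [Algebra.adjoin_eq_span] at h
  -- basic facts about `dΩ` and `gb`
  have d_one : dΩ (1 : Ω) = 0 := by
    have h := hd_leib 0 0 1 hone 1
    simp only [one_mul, mul_one, pow_zero, one_smul] at h
    have h2 : dΩ (1 : Ω) + 0 = dΩ 1 + dΩ 1 := by rw [add_zero]; exact h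
    exact (add_left_cancel h2).symm
  have gb_one : ∀ (r' : ℕ) (q' : ZMod 2) (x : Ω), x ∈ grade r' q' → gb x 1 = 0 := by
    intro r' q' x hx
    have h := hgb_leib r' 0 0 q' 0 0 x hx 1 hone 1 hone
    simp only [one_mul, mul_one, Nat.cast_zero, mul_zero, zpow_zero, ZMod.val_zero,
      pow_zero, one_smul] at h
    have h2 : gb x (1 : Ω) + 0 = gb x 1 + gb x 1 := by rw [add_zero]; exact h
    exact (add_left_cancel h2).symm
  have gb_one_left : ∀ z : Ω, gb 1 z = 0 := by
    intro z
    have hz := hspan z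
    induction hz using Submodule.span_induction with
    | mem m hm =>
        obtain ⟨⟨s', t'⟩, hg⟩ := hclos_hom m hm
        rw [hgb_skew 0 s' 0 t' 1 hone m hg, gb_one s' t' m hg]
        simp
    | zero => exact map_zero _
    | add u v hu hv ihu ihv => rw [map_add, ihu, ihv, add_zero]
    | smul c u hu ih => rw [map_smul, ih, smul_zero]
  have dv : ∀ b : A, dΩ (j (dO A b)) = 0 := by
    intro b; rw [← hd_iota b]; exact hd_sq (ι b)
  -- the differential property against `1`
  have q_one : ∀ (r' : ℕ) (q' : ZMod 2) (x : Ω), x ∈ grade r' q' →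
      dΩ (gb x 1) = gb (dΩ x) 1 + ((-1:ℝ)^((r':ℤ)-1)) • gb x (dΩ 1) := by
    intro r' q' x hx
    rw [gb_one r' q' x hx, gb_one (r'+1) q' (dΩ x) (hd_grade r' q' x hx), d_one]
    simp
  -- the differential property for pairs of letters
  have base : ∀ ℓ₁ ∈ L, ∃ r' : ℕ, ∃ q' : ZMod 2, ℓ₁ ∈ grade r' q' ∧
      ∀ ℓ₂ ∈ L, dΩ (gb ℓ₁ ℓ₂) = gb (dΩ ℓ₁) ℓ₂ + ((-1:ℝ)^((r':ℤ)-1)) • gb ℓ₁ (dΩ ℓ₂) := by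
    have hm1 : ((-1:ℝ)^(((0:ℕ):ℤ)-1)) = -1 := by norm_num
    have hp1 : ((-1:ℝ)^(((1:ℕ):ℤ)-1)) = 1 := by norm_num
    rintro ℓ₁ (⟨i, f, hf, rfl⟩ | ⟨i, f, hf, rfl⟩)
    · refine ⟨0, i, hgi i f hf, ?_⟩
      rintro ℓ₂ (⟨k, g, hg, rfl⟩ | ⟨k, g, hg, rfl⟩)
      · rw [h0, map_zero, hd_iota f, hd_iota g, h1', h1, hm1, neg_one_smul]
        rw [add_neg_cancel]
      · rw [h1, hd_iota (pb f g), hd_iota f, h2, dv g, map_zero, smul_zero, add_zero]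
    · refine ⟨1, i, hgj i f hf, ?_⟩
      rintro ℓ₂ (⟨k, g, hg, rfl⟩ | ⟨k, g, hg, rfl⟩)
      · rw [h1', hd_iota (pb f g), dv f, hd_iota g, h2, hp1, one_smul, map_zero,
          LinearMap.zero_apply, zero_add]
      · rw [h2, dv (pb f g), dv f, dv g, map_zero, LinearMap.zero_apply, map_zero,
          smul_zero, add_zero]
  -- the differential property extends from letters to all of `Ω` in the 2nd argument
  have QX : ∀ (x : Ω) (r' : ℕ) (q' : ZMod 2), x ∈ grade r' q' →
      (∀ ℓ ∈ L, dΩ (gb x ℓ) = gb (dΩ x) ℓ + ((-1:ℝ)^((r':ℤ)-1)) • gb x (dΩ ℓ)) →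
      ∀ y : Ω, dΩ (gb x y) = gb (dΩ x) y + ((-1:ℝ)^((r':ℤ)-1)) • gb x (dΩ y) := by
    intro x r' q' hx hbase
    have hcl : ∀ m ∈ Submonoid.closure L, (∃ s' t', m ∈ grade s' t') ∧
        dΩ (gb x m) = gb (dΩ x) m + ((-1:ℝ)^((r':ℤ)-1)) • gb x (dΩ m) := by
      intro m hm
      induction hm using Submonoid.closure_induction with
      | mem z hz =>
          obtain ⟨⟨s', t'⟩, hg⟩ := hlhom z hz
          exact ⟨⟨s', t', hg⟩, hbase z hz⟩
      | one => exact ⟨⟨0, 0, hone⟩, q_one r' q' x hx⟩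
      | mul a b ha hb iha ihb =>
          obtain ⟨⟨s₁, t₁, hg₁⟩, e₁⟩ := iha
          obtain ⟨⟨s₂, t₂, hg₂⟩, e₂⟩ := ihb
          exact ⟨⟨s₁ + s₂, t₁ + t₂, hmul s₁ s₂ t₁ t₂ a hg₁ b hg₂⟩,
            prod_step grade dΩ hd_grade hd_leib gb hgb_deg hgb_leib r' s₁ s₂ q' t₁ t₂
              x hx a hg₁ b hg₂ e₁ e₂⟩
    intro y
    have hy := hspan y
    induction hy using Submodule.span_induction with
    | mem m hm => exact (hcl m hm).2
    | zero => simp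
    | add u v hu hv ihu ihv =>
        simp only [map_add, LinearMap.add_apply]
        rw [ihu, ihv, smul_add]
        abel
    | smul c u hu ih =>
        simp only [map_smul, LinearMap.smul_apply]
        rw [ih, smul_add, smul_comm]
  -- the differential property for all monomials
  have main : ∀ m ∈ Submonoid.closure L, ∃ p : ℕ × ZMod 2, m ∈ grade p.1 p.2 ∧
      ∀ y : Ω, dΩ (gb m y) = gb (dΩ m) y + ((-1:ℝ)^((p.1:ℤ)-1)) • gb m (dΩ y) := by
    intro m hm
    induction hm using Submonoid.closure_induction with
    | mem z hz =>
        obtain ⟨r', q', hg, hb⟩ := base z hz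
        exact ⟨(r', q'), hg, QX z r' q' hg hb⟩
    | one =>
        refine ⟨(0, 0), hone, fun y => ?_⟩
        rw [gb_one_left y, gb_one_left (dΩ y), map_zero, d_one, map_zero,
          LinearMap.zero_apply, smul_zero, add_zero]
    | mul a b ha hb iha ihb =>
        obtain ⟨⟨r₁, q₁⟩, hg₁, H₁⟩ := iha
        obtain ⟨⟨r₂, q₂⟩, hg₂, H₂⟩ := ihb
        have hgab : a * b ∈ grade (r₁ + r₂) (q₁ + q₂) := hmul r₁ r₂ q₁ q₂ a hg₁ b hg₂
        have hhom : ∀ (s' : ℕ) (t' : ZMod 2) (y : Ω), y ∈ grade s' t' →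
            dΩ (gb (a*b) y) = gb (dΩ (a*b)) y +
              ((-1:ℝ)^(((r₁+r₂ : ℕ):ℤ)-1)) • gb (a*b) (dΩ y) := by
          intro s' t' y hy
          refine symm_step grade dΩ hd_grade gb hgb_skew (r₁+r₂) s' (q₁+q₂) t'
            (a*b) hgab y hy ?_
          refine prod_step grade dΩ hd_grade hd_leib gb hgb_deg hgb_leib s' r₁ r₂ t' q₁ q₂
            y hy a hg₁ b hg₂ ?_ ?_
          · exact symm_step grade dΩ hd_grade gb hgb_skew s' r₁ t' q₁ y hy a hg₁ (H₁ y)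
          · exact symm_step grade dΩ hd_grade gb hgb_skew s' r₂ t' q₂ y hy b hg₂ (H₂ y)
        refine ⟨(r₁ + r₂, q₁ + q₂), hgab, QX (a*b) (r₁+r₂) (q₁+q₂) hgab ?_⟩
        intro ℓ hℓ
        obtain ⟨⟨s', t'⟩, hg⟩ := hlhom ℓ hℓ
        exact hhom s' t' ℓ hg
  -- conclusion, via the projection onto the `(r, q)`-component
  intro r s q t x hx y hy
  have F1 : ∀ (z : Ω) (hz : z ∈ grade r q),
      (((LinearEquiv.ofBijective (DirectSum.coeLinearMap
        (fun p : ℕ × ZMod 2 => grade p.1 p.2)) hdecomp).symm z) (r, q) : Ω) = z := by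
    intro z hz
    rw [hdecomp.ofBijective_coeLinearMap_of_mem (i := ((r, q) : ℕ × ZMod 2)) hz]
  have F2 : ∀ (p' : ℕ × ZMod 2) (z : Ω), z ∈ grade p'.1 p'.2 → p' ≠ (r, q) →
      (((LinearEquiv.ofBijective (DirectSum.coeLinearMap
        (fun p : ℕ × ZMod 2 => grade p.1 p.2)) hdecomp).symm z) (r, q) : Ω) = 0 := by
    intro p' z hz hp
    rw [hdecomp.ofBijective_coeLinearMap_of_mem_ne hp hz]
    rfl
  have W : ∀ z ∈ Submodule.span ℝ ((Submonoid.closure L : Submonoid Ω) : Set Ω),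
      ∀ y' : Ω,
      dΩ (gb (((LinearEquiv.ofBijective (DirectSum.coeLinearMap
          (fun p : ℕ × ZMod 2 => grade p.1 p.2)) hdecomp).symm z) (r, q) : Ω) y') =
        gb (dΩ (((LinearEquiv.ofBijective (DirectSum.coeLinearMap
          (fun p : ℕ × ZMod 2 => grade p.1 p.2)) hdecomp).symm z) (r, q) : Ω)) y' +
        ((-1:ℝ)^((r:ℤ)-1)) • gb (((LinearEquiv.ofBijective (DirectSum.coeLinearMap
          (fun p : ℕ × ZMod 2 => grade p.1 p.2)) hdecomp).symm z) (r, q) : Ω) (dΩ y') := by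
    intro z hz
    induction hz using Submodule.span_induction with
    | mem m hm =>
        obtain ⟨p', hg, H⟩ := main m hm
        by_cases hp : p' = (r, q)
        · subst hp
          intro y'
          rw [F1 m hg]
          exact H y'
        · intro y'
          rw [F2 p' m hg hp]
          simp
    | zero =>
        intro y'
        rw [map_zero]
        simp
    | add u v hu hv ihu ihv =>
        intro y'
        simp only [map_add, DirectSum.add_apply, Submodule.coe_add, LinearMap.add_apply]
        rw [ihu y', ihv y', smul_add]
        abel
    | smul c u hu ih =>
        intro y'
        simp only [map_smul, DirectSum.smul_apply, SetLike.val_smul, LinearMap.smul_apply]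
        rw [ih y', smul_add, smul_comm]
  have hfin := W x (hspan x) y
  rwa [F1 x hx] at hfin


end SuperPoisson
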